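/- Let G, H, K be groups. If S ≤ G × H is an isogeny (π₁(S) has finite index in G, π₂(S) has finite index in H, ker(S) and coker(S) are finite) and T ≤ H × K is an isogeny, then the composition S ∘ T := {(g,k) : ∃ h, (g,h) ∈ S ∧ (h,k) ∈ T} is a subgroup of G × K with finite kernel and finite cokernel. -/

import Mathlib

private lemma aux_finite {G H : Type*} [Group G] [Group H] (S : Subgroup (G × H))
    (A : Subgroup H) (hker : Finite (S.comap (MonoidHom.inl G H))) (hA : Finite A) :
    Finite (S ⊓ A.comap (MonoidHom.snd G H) : Subgroup (G × H)) := by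
  set W : Subgroup (G × H) := S ⊓ A.comap (MonoidHom.snd G H) with hW
  let f : W →* H := (MonoidHom.snd G H).comp W.subtype
  have hle : f.range ≤ A := by
    rintro y ⟨w, rfl⟩
    exact w.2.2
  have hrange : Finite f.range :=
    Finite.of_injective (Subgroup.inclusion hle) (Subgroup.inclusion_injective hle)
  have hkerf : Finite f.ker := by
    apply Finite.of_injective (fun x : f.ker =>
      (⟨x.1.1.1, by
        have hx : (x.1 : G × H).2 = 1 := x.2
        have hs : (x.1 : G × H) ∈ S := x.1.2.1
        have : ((x.1 : G × H).1, (1 : H)) ∈ S := by rwa [← hx, Prod.mk.eta]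
        exact this⟩ : S.comap (MonoidHom.inl G H)))
    intro a b hab
    have h1 : (a.1 : G × H).1 = (b.1 : G × H).1 := congrArg Subtype.val hab
    have h2 : (a.1 : G × H).2 = (b.1 : G × H).2 := by
      have ha : (a.1 : G × H).2 = 1 := a.2
      have hb : (b.1 : G × H).2 = 1 := b.2
      rw [ha, hb]
    exact Subtype.ext (Subtype.ext (Prod.ext h1 h2))
  have hq : Finite (W ⧸ f.ker) :=
    Finite.of_equiv _ (QuotientGroup.quotientKerEquivRange f).symm.toEquiv
  have e : W ≃ (W ⧸ f.ker) × f.ker := Subgroup.groupEquivQuotientProdSubgroup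
  exact Finite.of_equiv _ e.symm

/-- Composition of isogenies: if `S ≤ G × H` and `T ≤ H × K` are isogenies, then
`S ∘ T = {(g,k) | ∃ h, (g,h) ∈ S ∧ (h,k) ∈ T}` is a subgroup of `G × K` with
finite kernel and finite cokernel. -/
theorem stmt_3 {G H K : Type*} [Group G] [Group H] [Group K]
    (S : Subgroup (G × H)) (T : Subgroup (H × K))
    (hS1 : (S.map (MonoidHom.fst G H)).FiniteIndex)
    (hS2 : (S.map (MonoidHom.snd G H)).FiniteIndex)
    (hSker : Finite (S.comap (MonoidHom.inl G H)))
    (hScoker : Finite (S.comap (MonoidHom.inr G H)))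
    (hT1 : (T.map (MonoidHom.fst H K)).FiniteIndex)
    (hT2 : (T.map (MonoidHom.snd H K)).FiniteIndex)
    (hTker : Finite (T.comap (MonoidHom.inl H K)))
    (hTcoker : Finite (T.comap (MonoidHom.inr H K))) :
    ∃ U : Subgroup (G × K),
      (U : Set (G × K)) = {p : G × K | ∃ h : H, (p.1, h) ∈ S ∧ (h, p.2) ∈ T} ∧
      Finite (U.comap (MonoidHom.inl G K)) ∧ Finite (U.comap (MonoidHom.inr G K)) := by
  refine ⟨{ carrier := {p : G × K | ∃ h : H, (p.1, h) ∈ S ∧ (h, p.2) ∈ T}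
            one_mem' := ⟨1, S.one_mem, T.one_mem⟩
            mul_mem' := ?_
            inv_mem' := ?_ }, rfl, ?_, ?_⟩
  · rintro a b ⟨h1, hs1, ht1⟩ ⟨h2, hs2, ht2⟩
    exact ⟨h1 * h2, S.mul_mem hs1 hs2, T.mul_mem ht1 ht2⟩
  · rintro a ⟨h, hs, ht⟩
    exact ⟨h⁻¹, S.inv_mem hs, T.inv_mem ht⟩
  · -- kernel
    have hWfin := aux_finite S (T.comap (MonoidHom.inl H K)) hSker hTker
    set W : Subgroup (G × H) :=
      S ⊓ (T.comap (MonoidHom.inl H K)).comap (MonoidHom.snd G H) with hWdef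
    refine Finite.of_surjective
      (f := fun w : W => (⟨w.1.1, ⟨w.1.2, w.2.1, w.2.2⟩⟩)) ?_
    rintro ⟨g, h, hs, ht⟩
    exact ⟨⟨(g, h), hs, ht⟩, rfl⟩
  · -- cokernel
    have hTswapker : Finite ((T.comap (MulEquiv.prodComm : K × H ≃* H × K).toMonoidHom).comap
        (MonoidHom.inl K H)) := by
      have he : (T.comap (MulEquiv.prodComm : K × H ≃* H × K).toMonoidHom).comap (MonoidHom.inl K H)
          = T.comap (MonoidHom.inr H K) := by
        ext k; exact Iff.rfl
      rw [he]; exact hTcoker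
    have hWfin := aux_finite (T.comap (MulEquiv.prodComm : K × H ≃* H × K).toMonoidHom)
      (S.comap (MonoidHom.inr G H)) hTswapker hScoker
    set W : Subgroup (K × H) :=
      (T.comap (MulEquiv.prodComm : K × H ≃* H × K).toMonoidHom)
        ⊓ (S.comap (MonoidHom.inr G H)).comap (MonoidHom.snd K H) with hWdef
    refine Finite.of_surjective
      (f := fun w : W => (⟨w.1.1, ⟨w.1.2, w.2.2, by
        have := w.2.1
        exact this⟩⟩)) ?_
    rintro ⟨k, h, hs, ht⟩
    refine ⟨⟨(k, h), ?_, hs⟩, rfl⟩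
    simpa using ht
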